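/- Let X and Y be categories and let Adj(X,Y) be the category whose objects are adjunctions F ⊣ F* (F : X ⥤ Y, F* : Y ⥤ X, with unit η_F and counit ε_F) and whose morphisms F ⟶ G are natural transformations F ⟹ G (equivalently, via mates, natural transformations G* ⟹ F*). Define Q(F,G,H) := H ∘ G* ∘ F (with the composite adjunction H G* F ⊣ F* G H*), functorial in the evident way using mates in the contravariant middle variable. Let φ be the canonical (coherence) isomorphism Q(Q(F,G,H),K,L) ≅ Q(F,G,Q(H,K,L)), let α : Q(F,G,G) = G G* F ⟹ F be the whiskering of the counit ε_G with F, and let β : H ⟹ H F* F = Q(F,F,H) be the whiskering of the unit η_F with H. Then (Q, φ, α, β) satisfies the flock axioms (F1), (F2) and (F3). -/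

import Mathlib

open CategoryTheory Category

universe v₁ v₂ u₁ u₂

variable {X : Type u₁} [Category.{v₁} X] {Y : Type u₂} [Category.{v₂} Y]

/-- `Q(F,G,H) = H ∘ G* ∘ F` for adjunctions between `X` and `Y` (here `Gs` denotes the
right adjoint `G*` of the middle adjunction). -/
def Qf (F : X ⥤ Y) (Gs : Y ⥤ X) (H : X ⥤ Y) : X ⥤ Y := F ⋙ Gs ⋙ H

/-- The action of `Q` on a morphism of `Adj(X,Y)` in the first (covariant) variable. -/
def Qmap₁ {F F' : X ⥤ Y} (θ : F ⟶ F') (Gs : Y ⥤ X) (H : X ⥤ Y) :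
    Qf F Gs H ⟶ Qf F' Gs H := Functor.whiskerRight θ (Gs ⋙ H)

/-- The action of `Q` on a morphism of `Adj(X,Y)` in the third (covariant) variable. -/
def Qmap₃ (F : X ⥤ Y) (Gs : Y ⥤ X) {H H' : X ⥤ Y} (θ : H ⟶ H') :
    Qf F Gs H ⟶ Qf F Gs H' := Functor.whiskerLeft F (Functor.whiskerLeft Gs θ)

/-- The canonical coherence isomorphism `φ : Q(Q(F,G,H),K,L) ≅ Q(F,G,Q(H,K,L))`
(composition of functors is strictly associative). -/
def Qphi (F : X ⥤ Y) (Gs : Y ⥤ X) (H : X ⥤ Y) (Ks : Y ⥤ X) (L : X ⥤ Y) :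
    Qf (Qf F Gs H) Ks L ≅ Qf F Gs (Qf H Ks L) := Iso.refl _

/-- `α : Q(F,G,G) = G G* F ⟹ F`, the whiskering of the counit `ε_G` with `F`. -/
def Qalpha (F : X ⥤ Y) {G : X ⥤ Y} {Gs : Y ⥤ X} (adjG : G ⊣ Gs) : Qf F Gs G ⟶ F :=
  Functor.whiskerLeft F adjG.counit ≫ F.rightUnitor.hom

/-- `β : H ⟹ H F* F = Q(F,F,H)`, the whiskering of the unit `η_F` with `H`. -/
def Qbeta {F : X ⥤ Y} {Fs : Y ⥤ X} (adjF : F ⊣ Fs) (H : X ⥤ Y) : H ⟶ Qf F Fs H :=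
  H.leftUnitor.inv ≫ Functor.whiskerRight adjF.unit H

/-- With `Q(F,G,H) := H ∘ G* ∘ F` on the category `Adj(X,Y)` of
adjunctions, `φ` the canonical coherence isomorphism, `α` the whiskering of the
counit and `β` the whiskering of the unit, the flock axioms (F1), (F2), (F3) hold. -/
theorem stmt10
    (F₁ F₂ F₃ F₄ F₅ F₆ F₇ : X ⥤ Y) (G₁ G₂ G₃ G₄ G₅ G₆ G₇ : Y ⥤ X)
    (a₁ : F₁ ⊣ G₁) (a₂ : F₂ ⊣ G₂) (a₃ : F₃ ⊣ G₃) (a₄ : F₄ ⊣ G₄)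
    (a₅ : F₅ ⊣ G₅) (a₆ : F₆ ⊣ G₆) (a₇ : F₇ ⊣ G₇) :
    -- (F1)
    ((Qphi (Qf F₁ G₂ F₃) G₄ F₅ G₆ F₇).hom ≫ (Qphi F₁ G₂ F₃ G₄ (Qf F₅ G₆ F₇)).hom
      = Qmap₁ (Qphi F₁ G₂ F₃ G₄ F₅).hom G₆ F₇ ≫
          (Qphi F₁ G₂ (Qf F₃ G₄ F₅) G₆ F₇).hom ≫
          Qmap₃ F₁ G₂ (Qphi F₃ G₄ F₅ G₆ F₇).hom) ∧
    -- (F2)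
    (Qmap₃ F₁ G₂ (Qbeta a₂ F₃) ≫ (Qphi F₁ G₂ F₂ G₂ F₃).inv ≫
        Qmap₁ (Qalpha F₁ a₂) G₂ F₃ = 𝟙 (Qf F₁ G₂ F₃)) ∧
    -- (F3)
    (Qbeta a₁ F₁ ≫ Qalpha F₁ a₁ = 𝟙 F₁) := by
  refine ⟨?_, ?_, ?_⟩ <;> ext x <;>
    simp [Qf, Qmap₁, Qmap₃, Qphi, Qalpha, Qbeta, ← Functor.map_comp]
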